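/- arXiv:2506.00093 — 8 statements merged into one kernel-verified Lean document; each statement's English description precedes it below -/
import Mathlib

section
/- Fix an integer m ≥ 1, let T_k = m·k(k-1)/2 + k, h(n) the sequence with h(n)=k iff T_k + 1 ≤ n < T_{k+1} + 1, and a(n) = n - h(n). Then for every k ≥ 0 and every 0 ≤ j ≤ m, the j-th iterate a^{(j)}(T_{k+1}) satisfies h(a^{(j)}(T_{k+1})) = k, and a^{(j)}(T_{k+1}) = T_{k+1} - j·k. -/
/-- Property P1⋆: for `0 ≤ j ≤ m`, `h(a^{(j)}(T_{k+1})) = k` and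
`a^{(j)}(T_{k+1}) = T_{k+1} - j·k`, where `T_k = m·k(k-1)/2 + k`. -/
theorem P1_star (m : ℕ) (hm : 1 ≤ m) (h : ℕ → ℕ)
    (hh : ∀ n k : ℕ, 1 ≤ n →
      (h n = k ↔ ((m * (k * (k - 1) / 2) + k) + 1 ≤ n ∧ n < (m * ((k + 1) * k / 2) + (k + 1)) + 1)))
    (a : ℕ → ℕ) (ha : ∀ n, a n = n - h n)
    (k j : ℕ) (hj : j ≤ m) :
    h (a^[j] (m * ((k + 1) * k / 2) + (k + 1))) = k ∧
    a^[j] (m * ((k + 1) * k / 2) + (k + 1)) = (m * ((k + 1) * k / 2) + (k + 1)) - j * k := by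
  set T := m * ((k + 1) * k / 2) + (k + 1) with hTdef
  have hprod : (k + 1) * k = k * (k - 1) + 2 * k := by
    cases k with
    | zero => simp
    | succ n => simp [Nat.succ_sub_one]; ring
  have hd : (k + 1) * k / 2 = k * (k - 1) / 2 + k := by omega
  have hAB : m * ((k + 1) * k / 2) = m * (k * (k - 1) / 2) + m * k := by
    rw [hd, Nat.mul_add]
  have key : ∀ i, i ≤ m → h (T - i * k) = k := by
    intro i hi
    have hik : i * k ≤ m * k := Nat.mul_le_mul_right _ hi
    rw [hh _ k (by omega)]
    omega
  have main : ∀ i, i ≤ m → h (a^[i] T) = k ∧ a^[i] T = T - i * k := by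
    intro i
    induction i with
    | zero =>
      intro _
      exact ⟨by simpa using key 0 (Nat.zero_le m), by simp⟩
    | succ n ih =>
      intro hn1
      obtain ⟨ih1, ih2⟩ := ih (by omega)
      have hnk : n * k ≤ m * k := Nat.mul_le_mul_right _ (by omega : n ≤ m)
      have hstep : a^[n + 1] T = T - (n + 1) * k := by
        rw [Function.iterate_succ_apply', ha, ih2, key n (by omega)]
        have hp : (n + 1) * k = n * k + k := by ring
        rw [hTdef]
        omega
      exact ⟨by rw [hstep]; exact key (n + 1) hn1, hstep⟩
  exact main j hj
end

section
/- Fix an integer m ≥ 1, let T_k = m·k(k-1)/2 + k, h(n) the sequence with h(n)=k iff T_k + 1 ≤ n < T_{k+1} + 1, and a(n) = n - h(n). Then for every k ≥ 0, the m-th iterate satisfies a^{(m)}(T_{k+1}) = T_k + 1. -/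
/-- `a^{(m)}(T_{k+1}) = T_k + 1`, where `T_k = m·k(k-1)/2 + k`. -/
theorem iterate_m_at_block_end (m : ℕ) (hm : 1 ≤ m) (h : ℕ → ℕ)
    (hh : ∀ n k : ℕ, 1 ≤ n →
      (h n = k ↔ ((m * (k * (k - 1) / 2) + k) + 1 ≤ n ∧ n < (m * ((k + 1) * k / 2) + (k + 1)) + 1)))
    (a : ℕ → ℕ) (ha : ∀ n, a n = n - h n)
    (k : ℕ) :
    a^[m] (m * ((k + 1) * k / 2) + (k + 1)) = (m * (k * (k - 1) / 2) + k) + 1 := by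
  set S := m * (k * (k - 1) / 2) + k with hS
  have hdiv : (k + 1) * k / 2 = k * (k - 1) / 2 + k := by
    have h1 : (k + 1) * k = k * (k - 1) + 2 * k := by
      cases k with
      | zero => simp
      | succ j => simp [Nat.succ_sub_one]; ring
    rw [h1, Nat.add_mul_div_left _ _ (by norm_num : 0 < 2)]
  have hT : m * ((k + 1) * k / 2) + (k + 1) = S + 1 + m * k := by
    rw [hdiv]; ring
  rw [hT]
  have key : ∀ j, j ≤ m → a^[j] (S + 1 + m * k) = S + 1 + (m - j) * k := by
    intro j
    induction j with
    | zero => simp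
    | succ i ih =>
      intro hij
      rw [Function.iterate_succ_apply', ih (by omega), ha]
      have hn1 : 1 ≤ S + 1 + (m - i) * k := by omega
      have hhn : h (S + 1 + (m - i) * k) = k := by
        rw [hh _ k hn1, hT]
        constructor
        · omega
        · have : (m - i) * k ≤ m * k := Nat.mul_le_mul_right k (by omega)
          omega
      rw [hhn]
      have hmi : m - i = (m - (i + 1)) + 1 := by omega
      rw [hmi, Nat.succ_mul]
      omega
  have := key m le_rfl
  simpa using this
end

section
/- Fix an integer m ≥ 1, let T_k = m·k(k-1)/2 + k, h(n) the sequence with h(n)=k iff T_k + 1 ≤ n < T_{k+1} + 1, and a(n) = n - h(n). Then for every k ≥ 1 and every 1 ≤ j ≤ m, h(a^{(j)}(T_k + 1)) = k - 1. -/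
/-- Property P2⋆: for `k ≥ 1` and `1 ≤ j ≤ m`, `h(a^{(j)}(T_k + 1)) = k - 1`. -/
theorem P2_star (m : ℕ) (hm : 1 ≤ m) (h : ℕ → ℕ)
    (hh : ∀ n k : ℕ, 1 ≤ n →
      (h n = k ↔ ((m * (k * (k - 1) / 2) + k) + 1 ≤ n ∧ n < (m * ((k + 1) * k / 2) + (k + 1)) + 1)))
    (a : ℕ → ℕ) (ha : ∀ n, a n = n - h n)
    (k j : ℕ) (hk : 1 ≤ k) (hj1 : 1 ≤ j) (hjm : j ≤ m) :
    h (a^[j] ((m * (k * (k - 1) / 2) + k) + 1)) = k - 1 := by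
  obtain ⟨k', rfl⟩ : ∃ k', k = k' + 1 := ⟨k - 1, by omega⟩
  have hdiv : (k' + 1) * k' / 2 = k' * (k' - 1) / 2 + k' := by
    rcases Nat.eq_zero_or_pos k' with h0 | h0
    · subst h0; simp
    · obtain ⟨t, rfl⟩ : ∃ t, k' = t + 1 := ⟨k' - 1, by omega⟩
      have he : (t + 1 + 1) * (t + 1) = (t + 1) * t + (t + 1) * 2 := by ring
      rw [he, Nat.add_mul_div_right _ _ (by norm_num : 0 < 2)]
      simp
  have hdiv2 : (k' + 2) * (k' + 1) / 2 = (k' + 1) * k' / 2 + (k' + 1) := by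
    have he : (k' + 2) * (k' + 1) = (k' + 1) * k' + (k' + 1) * 2 := by ring
    rw [he, Nat.add_mul_div_right _ _ (by norm_num : 0 < 2)]
  set S := m * (k' * (k' - 1) / 2) with hS
  have hT : m * ((k' + 1) * k' / 2) = S + m * k' := by rw [hdiv, Nat.mul_add]
  have hT2 : m * ((k' + 2) * (k' + 1) / 2) = S + m * k' + m * (k' + 1) := by
    rw [hdiv2, Nat.mul_add, hT]
  set n0 := m * ((k' + 1) * (k' + 1 - 1) / 2) + (k' + 1) + 1 with hn0
  have hn0' : n0 = S + m * k' + (k' + 1) + 1 := by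
    rw [hn0]; simp only [Nat.add_sub_cancel]; rw [hT]
  -- h n0 = k' + 1
  have hhn0 : h n0 = k' + 1 := by
    rw [hh n0 (k' + 1) (by omega)]
    simp only [Nat.add_sub_cancel]
    rw [hT, hT2, hn0']
    have : 1 ≤ m * (k' + 1) := Nat.one_le_iff_ne_zero.2 (by positivity)
    omega
  -- iterate value
  have key : ∀ i, 1 ≤ i → i ≤ m →
      a^[i] n0 = S + m * k' + 1 - (i - 1) * k' ∧
      h (a^[i] n0) = k' := by
    intro i
    induction i with
    | zero => omega
    | succ i ih =>
      intro _ hjm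
      have hmul : (i + 1) * k' ≤ m * k' := Nat.mul_le_mul_right k' hjm
      rcases Nat.eq_zero_or_pos i with h0 | h0
      · subst h0
        have hval : a^[1] n0 = S + m * k' + 1 := by
          rw [Function.iterate_one, ha, hhn0, hn0']
          omega
        refine ⟨by simpa using hval, ?_⟩
        rw [hval, hh _ k' (by omega)]
        rw [hT]
        simp only [zero_add, one_mul] at hmul
        omega
      · obtain ⟨hval, hhv⟩ := ih h0 (by omega)
        have hmul' : i * k' ≤ m * k' := Nat.mul_le_mul_right k' (by omega)
        have hstep : (i - 1) * k' + k' = i * k' := by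
          obtain ⟨t, rfl⟩ : ∃ t, i = t + 1 := ⟨i - 1, by omega⟩
          simp [Nat.add_mul]
        have hsucc : (i + 1) * k' = i * k' + k' := by ring
        have hval' : a^[i + 1] n0 = S + m * k' + 1 - i * k' := by
          rw [Function.iterate_succ_apply', ha, hhv, hval]
          omega
        refine ⟨by simpa using hval', ?_⟩
        rw [hval', hh _ k' (by omega)]
        rw [hT]
        omega
  simpa using (key j hj1 hjm).2
end

section
/- Fix an integer m ≥ 1, let T_k = m·k(k-1)/2 + k, h(n) the sequence with h(n)=k iff T_k + 1 ≤ n < T_{k+1} + 1, and a(n) = n - h(n). Then for every k ≥ 1, a^{(m)}(T_k + 1) = T_{k-1} + 1. -/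
private theorem aux_iter (h a : ℕ → ℕ) (x k' m' : ℕ)
    (hblock : ∀ n, x + k' + 1 ≤ n → n < x + (m' + 1) * k' + k' + 2 → h n = k')
    (htop : h (x + (m' + 1) * k' + k' + 2) = k' + 1)
    (ha : ∀ n, a n = n - h n) :
    a^[m' + 1] (x + (m' + 1) * k' + k' + 2) = x + k' + 1 := by
  have main : ∀ j, j ≤ m' →
      a^[j + 1] (x + (m' + 1) * k' + k' + 2) = x + k' + 1 + (m' - j) * k' := by
    intro j
    induction j with
    | zero =>
      intro _
      rw [Function.iterate_one, ha, htop, Nat.sub_zero]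
      have hy : (m' + 1) * k' = m' * k' + k' := by ring
      rw [hy]
      generalize m' * k' = t
      omega
    | succ j ih =>
      intro hj
      have hu : m' - j = (m' - (j + 1)) + 1 := by omega
      rw [Function.iterate_succ_apply', ih (by omega), ha, hu]
      set u := m' - (j + 1) with hudef
      have hle : (u + 1) * k' ≤ (m' + 1) * k' := Nat.mul_le_mul_right _ (by omega)
      have hb : h (x + k' + 1 + (u + 1) * k') = k' := by
        apply hblock
        · exact Nat.le_add_right _ _
        · generalize hq : (u + 1) * k' = q at hle ⊢
          generalize hr : (m' + 1) * k' = r at hle ⊢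
          omega
      rw [hb, add_mul, one_mul]
      generalize u * k' = t
      omega
  have := main m' le_rfl
  simpa using this

/-- For `k ≥ 1`, `a^{(m)}(T_k + 1) = T_{k-1} + 1`, where `T_k = m·k(k-1)/2 + k`. -/
theorem iterate_m_at_block_start (m : ℕ) (hm : 1 ≤ m) (h : ℕ → ℕ)
    (hh : ∀ n k : ℕ, 1 ≤ n →
      (h n = k ↔ ((m * (k * (k - 1) / 2) + k) + 1 ≤ n ∧ n < (m * ((k + 1) * k / 2) + (k + 1)) + 1)))
    (a : ℕ → ℕ) (ha : ∀ n, a n = n - h n)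
    (k : ℕ) (hk : 1 ≤ k) :
    a^[m] ((m * (k * (k - 1) / 2) + k) + 1)
      = (m * ((k - 1) * (k - 1 - 1) / 2) + (k - 1)) + 1 := by
  obtain ⟨k', rfl⟩ : ∃ k', k = k' + 1 := ⟨k - 1, by omega⟩
  obtain ⟨m', rfl⟩ : ∃ m', m = m' + 1 := ⟨m - 1, by omega⟩
  simp only [Nat.add_sub_cancel]
  have e1 : (k' + 1) * k' / 2 = k' * (k' - 1) / 2 + k' := by
    have h2 : (k' + 1) * k' = k' * (k' - 1) + k' * 2 := by
      cases k' with
      | zero => rfl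
      | succ c => simp only [Nat.succ_sub_one]; ring
    rw [h2, Nat.add_mul_div_right _ _ (by norm_num : (0:ℕ) < 2)]
  have e2 : (k' + 1 + 1) * (k' + 1) / 2 = k' * (k' - 1) / 2 + (2 * k' + 1) := by
    have h2 : (k' + 1 + 1) * (k' + 1) = k' * (k' - 1) + (2 * k' + 1) * 2 := by
      cases k' with
      | zero => rfl
      | succ c => simp only [Nat.succ_sub_one]; ring
    rw [h2, Nat.add_mul_div_right _ _ (by norm_num : (0:ℕ) < 2)]
  obtain ⟨A, hA⟩ : ∃ A, A = k' * (k' - 1) / 2 := ⟨_, rfl⟩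
  rw [← hA] at e1 e2 ⊢
  obtain ⟨x, hx⟩ : ∃ x, x = (m' + 1) * A := ⟨_, rfl⟩
  obtain ⟨y, hy⟩ : ∃ y, y = (m' + 1) * k' := ⟨_, rfl⟩
  have harg : (m' + 1) * ((k' + 1) * k' / 2) + (k' + 1) + 1 = x + y + k' + 2 := by
    rw [e1, Nat.mul_add, ← hx, ← hy]; ring
  rw [harg, hy, ← hx]
  apply aux_iter h a x k' m' _ _ ha
  · intro n h1 h2
    rw [← hy] at h2
    refine (hh n k' (by omega)).2 ⟨by rw [← hA, ← hx]; exact h1, ?_⟩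
    rw [e1, Nat.mul_add, ← hx, ← hy]
    omega
  · rw [← hy]
    refine (hh _ (k' + 1) ?_).2 ⟨?_, ?_⟩
    · exact Nat.succ_le_succ (Nat.zero_le _)
    · simp only [Nat.add_sub_cancel]
      rw [e1, Nat.mul_add, ← hx, ← hy]
      exact le_of_eq (by ring)
    · rw [e2, Nat.mul_add, ← hx]
      have h3 : (m' + 1) * (2 * k' + 1) = 2 * y + (m' + 1) := by rw [hy]; ring
      rw [h3]
      omega
end

section
/- Fix an integer m ≥ 1, let h(n) be the sequence with h(1)=0 in which each non-negative integer k appears exactly mk+1 times, and let a(n) = n - h(n). Then for every n ≥ 1, h(n+1) - 1 = h(a^{(m)}(n)), where a^{(m)} is the m-fold iterate of a. (In particular h(a^{(m)}(n)) = h(n+1) - 1 holds as an identity of integers, with h(n+1) ≥ 1 for n ≥ 1.) -/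
def Tfun (m s : ℕ) : ℕ := 1 + m * (s * (s - 1) / 2) + s

lemma Tfun_pos (m s : ℕ) : 1 ≤ Tfun m s := by unfold Tfun; omega

lemma tri (s : ℕ) : (s + 1) * s / 2 = s * (s - 1) / 2 + s := by
  cases s with
  | zero => rfl
  | succ t =>
    have h2 : (t + 1 + 1) * (t + 1) = (t + 1) * t + (t + 1) * 2 := by ring
    rw [Nat.succ_sub_one, h2, Nat.add_mul_div_right _ _ (by norm_num : 0 < 2)]

lemma Tfun_succ (m s : ℕ) : Tfun m (s + 1) = Tfun m s + (m * s + 1) := by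
  show 1 + m * ((s + 1) * ((s + 1) - 1) / 2) + (s + 1) = _
  rw [Nat.succ_sub_one, tri, Nat.mul_add]
  unfold Tfun
  ring

/-- The key identity: for all `n ≥ 1`, `h(n+1) - 1 = h(a^{(m)}(n))`,
with `h(n+1) ≥ 1`. -/
theorem key_identity (m : ℕ) (hm : 1 ≤ m) (h : ℕ → ℕ)
    (hh : ∀ n k : ℕ, 1 ≤ n →
      (h n = k ↔ (1 + m * (k * (k - 1) / 2) + k ≤ n ∧ n < 1 + m * ((k + 1) * k / 2) + (k + 1))))
    (a : ℕ → ℕ) (ha : ∀ n, a n = n - h n)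
    (n : ℕ) (hn : 1 ≤ n) :
    1 ≤ h (n + 1) ∧ h (n + 1) - 1 = h (a^[m] n) := by
  have hch : ∀ v k : ℕ, 1 ≤ v → (h v = k ↔ Tfun m k ≤ v ∧ v < Tfun m (k + 1)) := by
    intro v k hv
    simpa [Tfun] using hh v k hv
  have huniq : ∀ v k, Tfun m k ≤ v → v < Tfun m (k + 1) → h v = k := by
    intro v k h1 h2
    exact (hch v k (le_trans (Tfun_pos m k) h1)).2 ⟨h1, h2⟩
  have hstepv : ∀ v k, Tfun m k ≤ v → v < Tfun m (k + 1) → a v = v - k := by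
    intro v k h1 h2
    rw [ha, huniq v k h1 h2]
  -- Phase-2 lemma: iterating inside interval [T s, T (s+1))
  have L2 : ∀ s i v, Tfun m s + i * s ≤ v → v < Tfun m (s + 1) → a^[i] v = v - i * s := by
    intro s i
    induction i with
    | zero => intro v _ _; simp
    | succ j ih =>
      intro v h1 h2
      rw [Nat.succ_mul] at h1
      have hs : Tfun m s ≤ v := by omega
      have hav : a v = v - s := hstepv v s hs h2
      rw [Function.iterate_succ_apply, hav, ih (v - s) (by omega) (by omega),
        Nat.succ_mul]
      omega
  -- Main induction
  have G : ∀ s i, i ≤ m → ∀ r, r ≤ i * (s + 1) →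
      Tfun m s ≤ a^[i] (Tfun m (s + 1) - 1 + r) ∧
      a^[i] (Tfun m (s + 1) - 1 + r) < Tfun m (s + 1) := by
    intro s i
    induction i with
    | zero =>
      intro _ r hr
      rw [Nat.zero_mul] at hr
      interval_cases r
      have hT1 := Tfun_succ m s
      simp only [Function.iterate_zero, id]
      omega
    | succ j ih =>
      intro hj r hr
      have hT1 := Tfun_succ m s
      have hT2 := Tfun_succ m (s + 1)
      have hjm : (j + 1) * s ≤ m * s := Nat.mul_le_mul_right s hj
      have hjm1 : (j + 1) * (s + 1) ≤ m * (s + 1) := Nat.mul_le_mul_right (s + 1) hj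
      rw [Nat.succ_mul] at hjm hjm1
      rw [Nat.succ_mul] at hr
      by_cases hr0 : r = 0
      · subst hr0
        rw [L2 s (j + 1) _ (by rw [Nat.succ_mul]; omega) (by omega), Nat.succ_mul]
        omega
      · have hv1 : Tfun m (s + 1) ≤ Tfun m (s + 1) - 1 + r := by omega
        have hv2 : Tfun m (s + 1) - 1 + r < Tfun m (s + 1 + 1) := by omega
        have hav := hstepv _ (s + 1) hv1 hv2
        rw [Function.iterate_succ_apply, hav]
        by_cases hrs : r ≤ s + 1
        · have hms : 1 * s ≤ m * s := Nat.mul_le_mul_right s hm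
          rw [Nat.one_mul] at hms
          have hb : Tfun m s + j * s ≤ Tfun m (s + 1) - 1 + r - (s + 1) := by omega
          rw [L2 s j _ hb (by omega)]
          omega
        · have heq : Tfun m (s + 1) - 1 + r - (s + 1) = Tfun m (s + 1) - 1 + (r - (s + 1)) := by
            omega
          rw [heq]
          exact ih (le_trans (Nat.le_succ j) hj) (r - (s + 1)) (by omega)
  -- conclude
  have hn1 : 1 ≤ n + 1 := by omega
  set k := h (n + 1) with hk
  have hkint := (hch (n + 1) k hn1).1 rfl
  have hT0 : Tfun m 0 = 1 := by simp [Tfun]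
  have hT01 := Tfun_succ m 0
  rcases k with _ | s
  · omega
  · have hT1 := Tfun_succ m s
    have hT2 := Tfun_succ m (s + 1)
    have hr : n + 1 - Tfun m (s + 1) ≤ m * (s + 1) := by omega
    have hn' : n = Tfun m (s + 1) - 1 + (n + 1 - Tfun m (s + 1)) := by omega
    have hG := G s m le_rfl (n + 1 - Tfun m (s + 1)) hr
    rw [← hn'] at hG
    refine ⟨by omega, ?_⟩
    rw [huniq _ s hG.1 hG.2]
    omega
end

section
/- Fix an integer m ≥ 1. Let a: ℕ≥1 → ℕ≥1 be any sequence satisfying a(1) = 1 and a(n+1) = n - a^{(m)}(n) + a^{(m+1)}(n) for all n ≥ 1, where a^{(j)} denotes j-fold iteration. Then a(n) = n - h(n) for all n ≥ 1, where h(n) is the sequence with h(1)=0 in which each non-negative integer k appears exactly mk+1 times. -/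
def myL (m k : ℕ) : ℕ := 1 + m * (k * (k - 1) / 2) + k

def myf (h : ℕ → ℕ) (n : ℕ) : ℕ := n - h n

lemma myL_pos (m k : ℕ) : 1 ≤ myL m k := by unfold myL; omega

lemma myL_succ (m k : ℕ) : myL m (k+1) = myL m k + m * k + 1 := by
  unfold myL
  have h1 : (k+1) * ((k+1) - 1) = k * (k-1) + k * 2 := by
    cases k with
    | zero => simp
    | succ t => simp [Nat.succ_sub_one]; ring
  rw [h1, Nat.add_mul_div_right _ _ (by norm_num : (0:ℕ) < 2)]
  ring

lemma myL_zero (m : ℕ) : myL m 0 = 1 := by unfold myL; simp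

lemma h_myL (m : ℕ) (h : ℕ → ℕ)
    (hh : ∀ n k : ℕ, 1 ≤ n →
      (h n = k ↔ (1 + m * (k * (k - 1) / 2) + k ≤ n ∧ n < 1 + m * ((k + 1) * k / 2) + (k + 1))))
    (k r : ℕ) (hr : r ≤ m * k) : h (myL m k + r) = k := by
  have hub : myL m k + r < myL m (k+1) := by rw [myL_succ]; omega
  have h2 : myL m (k+1) = 1 + m * ((k + 1) * k / 2) + (k + 1) := by
    unfold myL; simp
  have h3 : myL m k = 1 + m * (k * (k - 1) / 2) + k := rfl
  refine (hh _ k (by have := myL_pos m k; omega)).mpr ⟨?_, ?_⟩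
  · rw [← h3]; omega
  · rw [← h2]; exact hub

lemma decomp (m : ℕ) : ∀ n, 1 ≤ n → ∃ k r, r ≤ m * k ∧ n = myL m k + r := by
  intro n hn
  induction n with
  | zero => omega
  | succ n ih =>
    rcases Nat.eq_zero_or_pos n with rfl | hn'
    · exact ⟨0, 0, by simp, by rw [myL_zero]⟩
    · obtain ⟨k, r, hr, rfl⟩ := ih hn'
      by_cases hc : r < m * k
      · exact ⟨k, r + 1, by omega, by omega⟩
      · refine ⟨k + 1, 0, by omega, ?_⟩
        rw [myL_succ]; omega

lemma myf_stay (m : ℕ) (h : ℕ → ℕ)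
    (hL : ∀ k r, r ≤ m * k → h (myL m k + r) = k)
    (k r : ℕ) (h1 : k ≤ r) (h2 : r ≤ m * k) :
    myf h (myL m k + r) = myL m k + (r - k) := by
  unfold myf
  rw [hL k r h2]
  have := myL_pos m k
  omega

lemma myf_drop (m : ℕ) (hm : 1 ≤ m) (h : ℕ → ℕ)
    (hL : ∀ k r, r ≤ m * k → h (myL m k + r) = k)
    (k r : ℕ) (h1 : r ≤ k) :
    myf h (myL m (k+1) + r) = myL m k + ((m-1) * k + r) := by
  unfold myf
  have hk1 : k + 1 ≤ m * (k + 1) := Nat.le_mul_of_pos_left _ hm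
  rw [hL (k+1) r (by omega)]
  rw [myL_succ]
  have := myL_pos m k
  have hmk : (m-1) * k + k = m * k := by
    obtain ⟨m', rfl⟩ : ∃ m', m = m' + 1 := ⟨m - 1, by omega⟩
    simp [Nat.succ_sub_one]; ring
  omega

lemma iter_formula (m : ℕ) (hm : 1 ≤ m) (h : ℕ → ℕ)
    (hL : ∀ k r, r ≤ m * k → h (myL m k + r) = k) :
    ∀ j, j ≤ m → ∀ k r, r ≤ m * (k+1) →
      (myf h)^[j] (myL m (k+1) + r) =
        if j ≤ r / (k+1) then myL m (k+1) + (r - j * (k+1))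
        else myL m k + (r % (k+1) + (m - j + r / (k+1)) * k) := by
  intro j
  induction j with
  | zero => intro _ k r hr; simp
  | succ j ih =>
    intro hj k r hr
    have hj' : j ≤ m := by omega
    rw [Function.iterate_succ_apply', ih hj' k r hr]
    have hqs : r / (k+1) * (k+1) + r % (k+1) = r := by
      rw [Nat.mul_comm]; exact Nat.div_add_mod r (k+1)
    have hs : r % (k+1) < k + 1 := Nat.mod_lt _ (by omega)
    have hdm : r / (k+1) * (k+1) ≤ r := Nat.div_mul_le_self r (k+1)
    by_cases h1 : j + 1 ≤ r / (k+1)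
    · rw [if_pos (by omega), if_pos h1]
      have hmul : (j + 1) * (k+1) ≤ r :=
        le_trans (Nat.mul_le_mul_right _ h1) hdm
      have hjj : (j+1) * (k+1) = j * (k+1) + (k+1) := by ring
      rw [myf_stay m h hL (k+1) (r - j * (k+1)) (by omega) (by omega)]
      congr 1
      omega
    · by_cases h2 : j ≤ r / (k+1)
      · -- j = r/(k+1), drop step
        have hje : j = r / (k+1) := by omega
        rw [if_pos h2, if_neg h1]
        have hroff : r - j * (k+1) = r % (k+1) := by rw [hje]; omega
        rw [hroff]
        rw [myf_drop m hm h hL k (r % (k+1)) (by omega)]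
        have he : m - (j+1) + r / (k+1) = m - 1 := by omega
        rw [he]
        congr 1
        omega
      · -- already at level k
        rw [if_neg h2, if_neg h1]
        set q := r / (k+1) with hq
        set s := r % (k+1) with hsd
        set c := m - j + q with hc
        clear_value q s c
        clear hq hsd
        have hc1 : 1 ≤ c := by omega
        obtain ⟨c', hc'⟩ : ∃ c', c = c' + 1 := ⟨c - 1, by omega⟩
        have hck2 : c * k = c' * k + k := by rw [hc']; ring
        have hck3 : (c+1) * k ≤ m * k := Nat.mul_le_mul_right _ (by omega)
        have hck4 : (c+1) * k = c * k + k := by ring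
        rw [myf_stay m h hL k (s + c * k) (by omega) (by omega)]
        have he : m - (j+1) + q = c' := by omega
        rw [he]
        congr 1
        omega

lemma myf_pos (m : ℕ) (hm : 1 ≤ m) (h : ℕ → ℕ)
    (hL : ∀ k r, r ≤ m * k → h (myL m k + r) = k) :
    ∀ x, 1 ≤ x → 1 ≤ myf h x ∧ myf h x ≤ x := by
  intro x hx
  constructor
  · obtain ⟨k, r, hr, rfl⟩ := decomp m x hx
    cases k with
    | zero =>
      rw [myf_stay m h hL 0 r (by omega) hr]
      have := myL_pos m 0; omega
    | succ t =>
      by_cases hc : t + 1 ≤ r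
      · rw [myf_stay m h hL (t+1) r hc hr]
        have := myL_pos m (t+1); omega
      · rw [myf_drop m hm h hL t r (by omega)]
        have := myL_pos m t; omega
  · exact Nat.sub_le _ _

lemma keyK (m : ℕ) (hm : 1 ≤ m) (h : ℕ → ℕ)
    (hL : ∀ k r, r ≤ m * k → h (myL m k + r) = k) :
    ∀ n, 1 ≤ n → 1 ≤ (myf h)^[m] n ∧ h ((myf h)^[m] n) + 1 = h (n + 1) := by
  intro n hn
  obtain ⟨k, r, hr, rfl⟩ := decomp m n hn
  cases k with
  | zero =>
    have hr0 : r = 0 := by omega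
    subst hr0
    have hfix : myf h (myL m 0 + 0) = myL m 0 + 0 := by
      rw [myf_stay m h hL 0 0 (by omega) (by omega)]
    have hiter : (myf h)^[m] (myL m 0 + 0) = myL m 0 + 0 :=
      Function.iterate_fixed hfix m
    rw [hiter]
    refine ⟨by have := myL_pos m 0; omega, ?_⟩
    rw [hL 0 0 (by omega)]
    have h2 : myL m 0 + 0 + 1 = myL m 1 + 0 := by rw [myL_succ]; omega
    rw [h2, hL 1 0 (by omega)]
  | succ t =>
    have hIF := iter_formula m hm h hL m (le_refl m) t r hr
    have hqs : r / (t+1) * (t+1) + r % (t+1) = r := by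
      rw [Nat.mul_comm]; exact Nat.div_add_mod r (t+1)
    have hs : r % (t+1) < t + 1 := Nat.mod_lt _ (by omega)
    have hdm : r / (t+1) * (t+1) ≤ r := Nat.div_mul_le_self r (t+1)
    by_cases hc : m ≤ r / (t+1)
    · -- r = m * (t+1)
      have hmul : m * (t+1) ≤ r / (t+1) * (t+1) := Nat.mul_le_mul_right _ hc
      have hre : r = m * (t+1) := by omega
      rw [if_pos hc] at hIF
      have hme : m * (t+1) = m * (t+1) := rfl
      have hr0 : r - m * (t+1) = 0 := by omega
      rw [hr0] at hIF
      rw [hIF]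
      refine ⟨by have := myL_pos m (t+1); omega, ?_⟩
      rw [hL (t+1) 0 (by omega)]
      have h2 : myL m (t+1) + r + 1 = myL m (t+2) + 0 := by
        rw [myL_succ m (t+1)]; omega
      rw [h2, hL (t+2) 0 (by omega)]
    · rw [if_neg hc] at hIF
      have he : m - m + r / (t+1) = r / (t+1) := by omega
      rw [he] at hIF
      rw [hIF]
      -- offset bound: r % (t+1) + (r/(t+1)) * t ≤ m * t
      have hq1 : r / (t+1) + 1 ≤ m := by omega
      have hmul : (r / (t+1) + 1) * t ≤ m * t := Nat.mul_le_mul_right _ hq1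
      have hmul2 : (r / (t+1) + 1) * t = r / (t+1) * t + t := by ring
      have hoff : r % (t+1) + r / (t+1) * t ≤ m * t := by omega
      refine ⟨by have := myL_pos m t; omega, ?_⟩
      rw [hL t _ hoff]
      -- r < m*(t+1), so n+1 = myL m (t+1) + (r+1)
      have hmul3 : (r / (t+1) + 1) * (t+1) ≤ m * (t+1) := Nat.mul_le_mul_right _ hq1
      have hmul4 : (r / (t+1) + 1) * (t+1) = r / (t+1) * (t+1) + (t+1) := by ring
      have hr1 : r + 1 ≤ m * (t+1) := by omega
      have h2 : myL m (t+1) + r + 1 = myL m (t+1) + (r + 1) := by omega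
      rw [h2, hL (t+1) (r+1) hr1]

/-- Main theorem: any sequence `a : ℕ≥1 → ℕ≥1` with `a(1) = 1` satisfying the
nested recurrence `a(n+1) = n - a^{(m)}(n) + a^{(m+1)}(n)` equals `n - h(n)`,
where `h` is the k-appearance sequence (each `k ≥ 0` appears `mk+1` times, `h(1)=0`). -/
theorem main_theorem (m : ℕ) (hm : 1 ≤ m)
    (h : ℕ → ℕ)
    (hh : ∀ n k : ℕ, 1 ≤ n →
      (h n = k ↔ (1 + m * (k * (k - 1) / 2) + k ≤ n ∧ n < 1 + m * ((k + 1) * k / 2) + (k + 1))))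
    (a : ℕ → ℕ) (hapos : ∀ n, 1 ≤ n → 1 ≤ a n) (ha1 : a 1 = 1)
    (hrec : ∀ n : ℕ, 1 ≤ n →
      (a (n + 1) : ℤ) = n - a^[m] n + a^[m + 1] n)
    (n : ℕ) (hn : 1 ≤ n) :
    a n = n - h n := by
  have hL : ∀ k r, r ≤ m * k → h (myL m k + r) = k := h_myL m h hh
  have h1 : h 1 = 0 := by
    have := hL 0 0 (by omega)
    rwa [myL_zero, ] at this
  have key : ∀ N, ∀ j, 1 ≤ j → j ≤ N → a j = j - h j := by
    intro N
    induction N with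
    | zero => intro j hj1 hj2; omega
    | succ N ih =>
      intro j hj1 hj2
      by_cases hj : j ≤ N
      · exact ih j hj1 hj
      · have hje : j = N + 1 := by omega
        subst hje
        rcases Nat.eq_zero_or_pos N with rfl | hN1
        · rw [ha1, h1]
        · -- iterates of a agree with iterates of myf h
          have hiter : ∀ i, a^[i] N = (myf h)^[i] N ∧
              1 ≤ (myf h)^[i] N ∧ (myf h)^[i] N ≤ N := by
            intro i
            induction i with
            | zero => exact ⟨rfl, hN1, le_refl N⟩
            | succ i ihi =>
              obtain ⟨he, hp1, hp2⟩ := ihi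
              have hpos := myf_pos m hm h hL ((myf h)^[i] N) hp1
              have hay : a ((myf h)^[i] N) = myf h ((myf h)^[i] N) := by
                rw [ih _ hp1 hp2]; rfl
              refine ⟨?_, ?_, ?_⟩
              · rw [Function.iterate_succ_apply', Function.iterate_succ_apply', he, hay]
              · rw [Function.iterate_succ_apply']; exact hpos.1
              · rw [Function.iterate_succ_apply']; exact le_trans hpos.2 hp2
          obtain ⟨hx1, hx2⟩ := keyK m hm h hL N hN1
          have e1 : a^[m] N = (myf h)^[m] N := (hiter m).1
          have e2 : a^[m+1] N = (myf h)^[m] N - h ((myf h)^[m] N) := by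
            rw [(hiter (m+1)).1, Function.iterate_succ_apply']
            rfl
          have hxN : (myf h)^[m] N ≤ N := (hiter m).2.2
          have hhx : h ((myf h)^[m] N) + 1 ≤ (myf h)^[m] N := by
            have h5 := (myf_pos m hm h hL ((myf h)^[m] N) hx1).1
            have h6 : myf h ((myf h)^[m] N) = (myf h)^[m] N - h ((myf h)^[m] N) := rfl
            rw [h6] at h5
            omega
          have ha := hrec N hN1
          rw [e1, e2] at ha
          omega
  exact key n n hn (le_refl n)
end

section
/- Fix an integer m ≥ 1. The sequence a(n) = n - ⌊(m-2+√((m-2)² + 8m(n-1)))/(2m)⌋ satisfies a(1) = 1 and the nested recurrence a(n+1) = n - a^{(m)}(n) + a^{(m+1)}(n) for all n ≥ 1. -/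
private def Nb (m : ℕ) : ℕ → ℕ
  | 0 => 1
  | k+1 => Nb m k + m * k + 1

private lemma Nb_succ (m k : ℕ) : Nb m (k+1) = Nb m k + m * k + 1 := rfl

private lemma Nb_ge (m k : ℕ) : k + 1 ≤ Nb m k := by
  induction k with
  | zero => simp [Nb]
  | succ k ih => rw [Nb_succ]; omega

private lemma Nb_two_mul (m k : ℕ) : 2 * Nb m k + m * k = m * (k * k) + 2 * k + 2 := by
  induction k with
  | zero => simp [Nb]
  | succ k ih =>
    rw [Nb_succ]
    have h2 : m*((k+1)*(k+1)) = m*(k*k) + 2*(m*k) + m := by ring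
    have h3 : m*(k+1) = m*k + m := by ring
    omega

private lemma floor_formula (m n k : ℕ) (hm : 1 ≤ m) (h1 : Nb m k ≤ n) (h2 : n < Nb m (k+1)) :
    ⌊(((m : ℝ) - 2) + Real.sqrt (((m : ℝ) - 2) ^ 2 + 8 * m * ((n : ℝ) - 1))) / (2 * m)⌋ = (k : ℤ) := by
  have hmR : (1:ℝ) ≤ m := by exact_mod_cast hm
  have hn1 : 1 ≤ n := by have := Nb_ge m k; omega
  have hnR : (1:ℝ) ≤ n := by exact_mod_cast hn1
  have hA : m * (k*k) + 2*k + 2 ≤ 2*n + m*k := by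
    have h := Nat.mul_le_mul_left 2 h1
    have := Nb_two_mul m k
    omega
  have hB : 2*n + 2 + m*(k+1) ≤ m * ((k+1)*(k+1)) + 2*(k+1) + 2 := by
    have h : n + 1 ≤ Nb m (k+1) := h2
    have := Nb_two_mul m (k+1)
    omega
  have hAR : (m:ℝ) * (k*k) + 2*k + 2 ≤ 2*n + m*k := by exact_mod_cast hA
  have hBR : 2*(n:ℝ) + 2 + m*(k+1) ≤ (m:ℝ)*((k+1)*(k+1)) + 2*(k+1) + 2 := by exact_mod_cast hB
  set M := (m:ℝ) with hM
  set D := (M - 2)^2 + 8*M*((n:ℝ)-1) with hD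
  have hk0 : (0:ℝ) ≤ (k:ℝ) := Nat.cast_nonneg k
  have hMk : (0:ℝ) ≤ M * (k:ℝ) := mul_nonneg (by linarith) hk0
  have hD0 : 0 ≤ D := by nlinarith [sq_nonneg (M-2)]
  have hsq : Real.sqrt D ^ 2 = D := Real.sq_sqrt hD0
  have hs0 := Real.sqrt_nonneg D
  have hC1 : M*(k:ℝ)^2 + 2*k + 2 ≤ 2*n + M*k := by linarith [hAR]
  have hC2 : 2*(n:ℝ) ≤ M*(k:ℝ)^2 + M*k + 2*k + 2 := by nlinarith [hBR]
  have h4M : (0:ℝ) ≤ 4*M := by linarith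
  rw [Int.floor_eq_iff]
  constructor
  · rw [le_div_iff₀ (by linarith : (0:ℝ) < 2*M)]
    push_cast
    rcases le_or_gt (2*M*k - M + 2) 0 with h | h
    · linarith
    · have hle : 2*M*k - M + 2 ≤ Real.sqrt D := by
        rw [Real.le_sqrt' h, hD]
        nlinarith [mul_le_mul_of_nonneg_left hC1 h4M]
      linarith
  · rw [div_lt_iff₀ (by linarith : (0:ℝ) < 2*M)]
    push_cast
    have hlt : Real.sqrt D < 2*M*k + M + 2 := by
      rw [Real.sqrt_lt' (by linarith : (0:ℝ) < 2*M*k + M + 2), hD]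
      nlinarith [mul_le_mul_of_nonneg_left hC2 h4M]
    linarith

private lemma iter_eq (m : ℕ) (a : ℕ → ℕ)
    (aval : ∀ n k, Nb m k ≤ n → n < Nb m (k+1) → a n = n - k) :
    ∀ j k n, Nb m k + j * k ≤ n → n < Nb m (k+1) → a^[j] n = n - j * k := by
  intro j
  induction j with
  | zero => intro k n _ _; simp
  | succ j ih =>
    intro k n h1 h2
    have e : (j+1)*k = j*k + k := by ring
    rw [Function.iterate_succ_apply', ih k n (by omega) h2,
      aval (n - j*k) k (by omega) (by omega)]
    omega

/-- The explicit sequence `a(n) = n - ⌊(m-2+√((m-2)²+8m(n-1)))/(2m)⌋` satisfies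
`a(1) = 1` and the nested recurrence `a(n+1) = n - a^{(m)}(n) + a^{(m+1)}(n)`. -/
theorem explicit_solution_satisfies (m : ℕ) (hm : 1 ≤ m) (a : ℕ → ℕ)
    (ha : ∀ n : ℕ, (a n : ℤ) = n -
      ⌊(((m : ℝ) - 2) + Real.sqrt (((m : ℝ) - 2) ^ 2 + 8 * m * ((n : ℝ) - 1))) / (2 * m)⌋) :
    a 1 = 1 ∧ ∀ n : ℕ, 1 ≤ n →
      (a (n + 1) : ℤ) = n - a^[m] n + a^[m + 1] n := by
  have aval : ∀ n k, Nb m k ≤ n → n < Nb m (k+1) → a n = n - k := by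
    intro n k h1 h2
    have h := ha n
    rw [floor_formula m n k hm h1 h2] at h
    have hk : k + 1 ≤ n := by have := Nb_ge m k; omega
    omega
  have hexists : ∀ n, 1 ≤ n → ∃ k, Nb m k ≤ n ∧ n < Nb m (k+1) := by
    intro n hn
    have hP : Nb m 0 ≤ n := by simpa [Nb] using hn
    have hbig : ∀ j, n < j → ¬ Nb m j ≤ n := fun j hj h =>
      absurd (le_trans (Nb_ge m j) h) (by omega)
    refine ⟨Nat.findGreatest (fun k => Nb m k ≤ n) n, ?_, ?_⟩
    · exact Nat.findGreatest_spec (P := fun k => Nb m k ≤ n) (Nat.zero_le n) hP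
    · set K := Nat.findGreatest (fun k => Nb m k ≤ n) n with hK
      rcases le_or_gt (Nb m (K+1)) n with h | h
      · exfalso
        have hKn : K + 1 ≤ n := by have := Nb_ge m (K+1); omega
        exact Nat.findGreatest_is_greatest (P := fun k => Nb m k ≤ n) (n := n)
          (k := K + 1) (by omega) hKn h
      · exact h
  refine ⟨?_, ?_⟩
  · have h0 : a 1 = 1 - 0 := aval 1 0 (le_refl _) (by simp [Nb])
    simpa using h0
  · intro n hn
    obtain ⟨k, hk1, hk2⟩ := hexists n hn
    have hNs := Nb_succ m k
    have hNs2 := Nb_succ m (k+1)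
    have hge := Nb_ge m k
    rcases eq_or_lt_of_le (Nat.succ_le_of_lt hk2) with htop | hlt
    · -- top of block: n = Nb m k + m*k
      have him : a^[m] n = n - m*k := iter_eq m a aval m k n (by omega) hk2
      have him1 : a^[m+1] n = n - m*k - k := by
        rw [Function.iterate_succ_apply', him, aval (n - m*k) k (by omega) (by omega)]
      have hanext : a (n+1) = (n+1) - (k+1) :=
        aval (n+1) (k+1) (le_of_eq htop.symm) (by omega)
      rw [hanext, him, him1]
      omega
    · -- interior of block; k ≥ 1
      obtain ⟨t, rfl⟩ : ∃ t, k = t + 1 := by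
        cases k with
        | zero =>
          exfalso
          have h0 : Nb m 0 = 1 := rfl
          have h1 : Nb m 1 = 2 := by simp [Nb]
          omega
        | succ t => exact ⟨t, rfl⟩
      have hNst := Nb_succ m t
      have hmt1 : 1*(t+1) ≤ m*(t+1) := Nat.mul_le_mul_right _ hm
      have hget := Nb_ge m t
      obtain ⟨r, hr⟩ : ∃ r, n = Nb m (t+1) + r := ⟨n - Nb m (t+1), by omega⟩
      have hrm : r < m*(t+1) := by omega
      obtain ⟨q, s, hqs, hslt⟩ : ∃ q s, r = (t+1)*q + s ∧ s < t+1 :=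
        ⟨r/(t+1), r%(t+1), (Nat.div_add_mod r (t+1)).symm, Nat.mod_lt _ (Nat.succ_pos t)⟩
      have hqm : q < m := by
        by_contra hq
        push_neg at hq
        have h1 : (t+1)*m ≤ (t+1)*q := Nat.mul_le_mul_left _ hq
        have h2 : (t+1)*m = m*(t+1) := by ring
        omega
      have hcomm : q*(t+1) = (t+1)*q := by ring
      have e2 : t*(m-1) + t = m*t := by
        have hm1 : (m-1)+1 = m := by omega
        calc t*(m-1) + t = t*((m-1)+1) := by ring
        _ = m*t := by rw [hm1]; ring
      have h1 : a^[q] n = n - q*(t+1) := iter_eq m a aval q (t+1) n (by omega) hk2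
      have hval1 : n - q*(t+1) = Nb m (t+1) + s := by omega
      have h2 : a^[q+1] n = Nb m t + (t*(m-1) + s) := by
        rw [Function.iterate_succ_apply', h1, hval1,
          aval (Nb m (t+1) + s) (t+1) (by omega) (by omega)]
        omega
      have f2 : (m-1-q)+q = m-1 := by omega
      have f4 : (m-1-q)*t + q*t = (m-1)*t := by rw [← Nat.add_mul, f2]
      have f3 : t*(m-1) = (m-1)*t := Nat.mul_comm _ _
      have h3 : a^[m] n = Nb m t + (q*t + s) := by
        have hadd := Function.iterate_add_apply a (m-1-q) (q+1) n
        rw [show (m-1-q)+(q+1) = m from by omega] at hadd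
        rw [hadd, h2,
          iter_eq m a aval (m-1-q) t (Nb m t + (t*(m-1) + s)) (by omega) (by omega)]
        omega
      have h4 : a^[m+1] n = Nb m t + (q*t + s) - t := by
        have hqt : q*t ≤ (m-1)*t := Nat.mul_le_mul_right t (by omega)
        rw [Function.iterate_succ_apply', h3,
          aval (Nb m t + (q*t+s)) t (by omega) (by omega)]
      have hanext : a (n+1) = (n+1) - (t+1) := aval (n+1) (t+1) (by omega) hlt
      rw [hanext, h3, h4]
      omega
end

section
/- Fix an integer m ≥ 1 and let S = {m·j(j-1)/2 + j : j ≥ 1}. Define a(1) = 1 and a(n+1) = a(n) + 1 if n ∉ S, a(n+1) = a(n) if n ∈ S, for n ≥ 1. Then a satisfies the nested recurrence a(n+1) = n - a^{(m)}(n) + a^{(m+1)}(n) for all n ≥ 1. -/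
private def Taux (j : ℕ) : ℕ := j * (j - 1) / 2

private def Pg (m j : ℕ) : ℕ := m * Taux j + j

private lemma Taux_succ (j : ℕ) : Taux (j + 1) = Taux j + j := by
  unfold Taux
  cases j with
  | zero => rfl
  | succ k =>
    simp only [Nat.add_sub_cancel]
    have h : (k + 1 + 1) * (k + 1) = (k + 1) * k + (k + 1) * 2 := by ring
    rw [h, Nat.add_mul_div_right _ _ (by norm_num : 0 < 2)]

private lemma Pg_succ (m j : ℕ) : Pg m (j + 1) = Pg m j + m * j + 1 := by
  simp only [Pg, Taux_succ, Nat.mul_add]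
  ring

/-- The conditionally defined slow sequence (increment off `S`) satisfies the
nested recurrence `a(n+1) = n - a^{(m)}(n) + a^{(m+1)}(n)`. -/
theorem conditional_satisfies_recurrence (m : ℕ) (hm : 1 ≤ m)
    (S : Set ℕ) (hS : S = {x | ∃ j : ℕ, 1 ≤ j ∧ x = m * (j * (j - 1) / 2) + j})
    (a : ℕ → ℕ) (ha1 : a 1 = 1)
    (hstep : ∀ n : ℕ, 1 ≤ n →
      ((n ∈ S → a (n + 1) = a n) ∧ (n ∉ S → a (n + 1) = a n + 1))) :
    ∀ n : ℕ, 1 ≤ n → (a (n + 1) : ℤ) = n - a^[m] n + a^[m + 1] n := by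
  have hSmem : ∀ x, x ∈ S ↔ ∃ j : ℕ, 1 ≤ j ∧ x = Pg m j := by
    intro x
    simp only [hS, Set.mem_setOf_eq, Pg, Taux]
  have hmemS : ∀ j, 1 ≤ j → Pg m j ∈ S := fun j hj => (hSmem _).2 ⟨j, hj, rfl⟩
  have hPmono : StrictMono (Pg m) := by
    apply strictMono_nat_of_lt_succ
    intro j
    rw [Pg_succ]
    omega
  have hnotmem : ∀ j r, 1 ≤ r → r ≤ m * j → Pg m j + r ∉ S := by
    intro j r h1 h2 hmem'
    obtain ⟨i, hi1, hie⟩ := (hSmem _).1 hmem'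
    have hgt : Pg m j < Pg m i := by omega
    have hji : j < i := hPmono.lt_iff_lt.mp hgt
    have hle : Pg m (j + 1) ≤ Pg m i := hPmono.monotone hji
    rw [Pg_succ] at hle
    omega
  -- value lemma
  have hval : ∀ j r, 1 ≤ r → r ≤ m * j + 1 → a (Pg m j + r) = m * Taux j + r := by
    intro j
    induction j with
    | zero =>
      intro r h1 h2
      have hr : r = 1 := by omega
      subst hr
      have h0 : Pg m 0 = 0 := by simp [Pg, Taux]
      have hT : Taux 0 = 0 := by simp [Taux]
      rw [h0, hT]
      simpa using ha1
    | succ i ih =>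
      intro r
      induction r with
      | zero => omega
      | succ t iht =>
        intro h1 h2
        cases t with
        | zero =>
          have h0 : 1 ≤ Pg m (i + 1) := by
            have : i + 1 ≤ Pg m (i + 1) := Nat.le_add_left _ _
            omega
          have hs := (hstep (Pg m (i + 1)) h0).1 (hmemS (i + 1) (by omega))
          have hv : a (Pg m i + (m * i + 1)) = m * Taux i + (m * i + 1) :=
            ih (m * i + 1) (by omega) (by omega)
          have hP : Pg m (i + 1) = Pg m i + (m * i + 1) := by rw [Pg_succ]; omega
          rw [hs, hP, hv, Taux_succ, Nat.mul_add]
          ring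
        | succ u =>
          have hnm := hnotmem (i + 1) (u + 1) (by omega) (by omega)
          have h0 : 1 ≤ Pg m (i + 1) + (u + 1) := by omega
          have hs := (hstep _ h0).2 hnm
          have hv := iht (by omega) (by omega)
          have hre : Pg m (i + 1) + (u + 1 + 1) = Pg m (i + 1) + (u + 1) + 1 := by omega
          rw [hre, hs, hv]
          omega
  -- iterate lemma, maximal case
  have hiterA : ∀ j k, k ≤ m → a^[k] (Pg m (j + 1)) = Pg m j + (m - k) * j + 1 := by
    intro j k
    induction k with
    | zero =>
      intro _
      simp only [Function.iterate_zero, id_eq, Nat.sub_zero]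
      rw [Pg_succ]
    | succ k ihk =>
      intro hk1
      have hk : k ≤ m := by omega
      rw [Function.iterate_succ_apply', ihk hk]
      have hass : Pg m j + (m - k) * j + 1 = Pg m j + ((m - k) * j + 1) := by omega
      have hub : (m - k) * j ≤ m * j := Nat.mul_le_mul_right _ (by omega)
      rw [hass, hval j ((m - k) * j + 1) (by omega) (by omega)]
      obtain ⟨e, he⟩ : ∃ e, m - k = e + 1 := ⟨m - k - 1, by omega⟩
      have he2 : m - (k + 1) = e := by omega
      rw [he, he2]
      simp only [Pg]
      ring
  -- iterate lemma, generic case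
  have hiterB : ∀ i r, 1 ≤ r → r ≤ m * (i + 1) → ∀ k, k ≤ m →
      (∃ r', 1 ≤ r' ∧ r' + k * (i + 1) = r ∧
        a^[k] (Pg m (i + 1) + r) = Pg m (i + 1) + r') ∨
      (∃ s, (m - k) * i + 1 ≤ s ∧ s ≤ m * i + 1 ∧
        a^[k] (Pg m (i + 1) + r) = Pg m i + s) := by
    intro i r h1 h2 k
    induction k with
    | zero =>
      intro _
      left
      exact ⟨r, h1, by omega, by simp⟩
    | succ k ihk =>
      intro hk1
      have hk : k ≤ m := by omega
      have hmul : (m - 1) * i + i = m * i := by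
        have h : m - 1 + 1 = m := by omega
        calc (m - 1) * i + i = (m - 1 + 1) * i := by ring
          _ = m * i := by rw [h]
      rcases ihk hk with ⟨r', hr1, hr2, hr3⟩ | ⟨s, hs1, hs2, hs3⟩
      · have hr'le : r' ≤ m * (i + 1) + 1 := by
          have : k * (i + 1) ≥ 0 := Nat.zero_le _
          omega
        rw [Function.iterate_succ_apply', hr3, hval (i + 1) r' hr1 hr'le]
        by_cases hcase : i + 1 < r'
        · left
          refine ⟨r' - (i + 1), by omega, ?_, ?_⟩
          · have hx : (k + 1) * (i + 1) = k * (i + 1) + (i + 1) := by ring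
            omega
          · simp only [Pg]
            omega
        · right
          refine ⟨(m - 1) * i + r', ?_, by omega, ?_⟩
          · have hle : (m - (k + 1)) * i ≤ (m - 1) * i :=
              Nat.mul_le_mul_right _ (by omega)
            omega
          · rw [Taux_succ, Nat.mul_add]
            simp only [Pg]
            omega
      · have hsge : i + 1 ≤ s := by
          have h1' : 1 ≤ m - k := by omega
          have h2' : 1 * i ≤ (m - k) * i := Nat.mul_le_mul_right _ h1'
          rw [one_mul] at h2'
          omega
        rw [Function.iterate_succ_apply', hs3, hval i s (by omega) hs2]
        right
        refine ⟨s - i, ?_, by omega, ?_⟩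
        · have hx : (m - (k + 1)) * i + i = (m - k) * i := by
            have h : m - (k + 1) + 1 = m - k := by omega
            calc (m - (k + 1)) * i + i = (m - (k + 1) + 1) * i := by ring
              _ = (m - k) * i := by rw [h]
          omega
        · simp only [Pg]
          omega
  -- decomposition
  have hdecomp : ∀ n : ℕ, 1 ≤ n → ∃ j r, 1 ≤ r ∧ r ≤ m * j + 1 ∧ n = Pg m j + r := by
    intro n
    induction n with
    | zero => omega
    | succ n ihn =>
      intro _
      by_cases hn : 1 ≤ n
      · obtain ⟨j, r, h1, h2, h3⟩ := ihn hn
        by_cases hr : r ≤ m * j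
        · exact ⟨j, r + 1, by omega, by omega, by omega⟩
        · refine ⟨j + 1, 1, le_refl 1, by omega, ?_⟩
          rw [Pg_succ]
          omega
      · refine ⟨0, 1, le_refl 1, by omega, ?_⟩
        have h0 : Pg m 0 = 0 := by simp [Pg, Taux]
        omega
  -- main proof
  intro n hn
  obtain ⟨j, r, h1, h2, h3⟩ := hdecomp n hn
  subst h3
  by_cases hr : r ≤ m * j
  · -- generic case: n ∉ S
    have hj : 1 ≤ j := by
      rcases Nat.eq_zero_or_pos j with h | h
      · subst h; simp at hr; omega
      · exact h
    obtain ⟨i, hi⟩ : ∃ i, j = i + 1 := ⟨j - 1, by omega⟩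
    subst hi
    have hnS := hnotmem (i + 1) r h1 hr
    have hn1 := (hstep _ hn).2 hnS
    have hvn := hval (i + 1) r h1 (by omega)
    rcases hiterB i r h1 hr m (le_refl m) with ⟨r', hr1, hr2, _⟩ | ⟨s, hs1, hs2, hs3⟩
    · exfalso; omega
    · have hs1' : 1 ≤ s := by
        have h0 : m - m = 0 := Nat.sub_self m
        rw [h0, Nat.zero_mul] at hs1
        omega
      have hvm1 : a^[m + 1] (Pg m (i + 1) + r) = m * Taux i + s := by
        rw [Function.iterate_succ_apply', hs3, hval i s hs1' hs2]
      rw [hn1, hvn, hs3, hvm1]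
      have key : m * Taux (i + 1) = m * Taux i + m * i := by
        rw [Taux_succ, Nat.mul_add]
      have e1 : Pg m i = m * Taux i + i := rfl
      have e2 : Pg m (i + 1) = m * Taux i + m * i + (i + 1) := by
        simp only [Pg]
        omega
      push_cast
      have key' : (m : ℤ) * Taux (i + 1) = m * Taux i + m * i := by exact_mod_cast key
      have e1' : (Pg m i : ℤ) = m * Taux i + i := by exact_mod_cast e1
      have e2' : (Pg m (i + 1) : ℤ) = m * Taux i + m * i + (i + 1) := by exact_mod_cast e2
      rw [key', e1', e2']
      ring
  · -- maximal case: n = Pg m (j+1) ∈ S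
    have hreq : r = m * j + 1 := by omega
    have hPn : Pg m j + r = Pg m (j + 1) := by rw [Pg_succ]; omega
    have hmemn : Pg m j + r ∈ S := by
      rw [hPn]; exact hmemS (j + 1) (by omega)
    have hn1 := (hstep _ hn).1 hmemn
    have hvn := hval j r h1 h2
    have hA : a^[m] (Pg m j + r) = Pg m j + 1 := by
      rw [hPn, hiterA j m (le_refl m), Nat.sub_self, Nat.zero_mul, Nat.add_zero]
    have hA1 : a^[m + 1] (Pg m j + r) = m * Taux j + 1 := by
      rw [Function.iterate_succ_apply', hA, hval j 1 (le_refl 1) (by omega)]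
    rw [hn1, hvn, hA, hA1]
    push_cast
    ring
end
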